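/- Let (X,d) be a compact metric space with a finite Borel measure μ. If a surjective self-mapping ψ: X → X is 1-Lipschitz (d(ψ(x),ψ(y)) ≤ d(x,y) for all x,y) and measure-contracting (μ(A) ≤ μ(ψ⁻¹(A)) for every Borel set A), then ψ is a bijective isometry and is measure-preserving (μ(ψ⁻¹(A)) = μ(A) for every Borel set A). -/
import Mathlib


open MeasureTheory

private lemma iter_nonexp {K : Type*} [MetricSpace K] (g : K → K)
    (hl : ∀ a b, dist (g a) (g b) ≤ dist a b) :
    ∀ n a b, dist (g^[n] a) (g^[n] b) ≤ dist a b := by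
  intro n
  induction n with
  | zero => simp
  | succ n ih =>
    intro a b
    simp only [Function.iterate_succ_apply']
    exact le_trans (hl _ _) (ih a b)

private lemma recur {K : Type*} [MetricSpace K] [CompactSpace K] (g : K → K)
    (hs : Function.Surjective g) (hl : ∀ a b, dist (g a) (g b) ≤ dist a b)
    (p : K) (ε : ℝ) (hε : 0 < ε) : ∃ N, 1 ≤ N ∧ dist (g^[N] p) p < ε := by
  set σ := Function.surjInv hs with hσ
  have hgσ : ∀ q, g (σ q) = q := fun q => Function.surjInv_eq hs q
  have hiter : ∀ n q, g^[n] (σ^[n] q) = q := by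
    intro n
    induction n with
    | zero => simp
    | succ n ih =>
      intro q
      rw [Function.iterate_succ_apply, Function.iterate_succ_apply', hgσ, ih]
  -- subsequence of backward orbit converging
  obtain ⟨a, -, φ, hφ, hconv⟩ :=
    IsCompact.tendsto_subseq (x := fun n => σ^[n] p) isCompact_univ
      (fun n => Set.mem_univ _)
  rw [Metric.tendsto_atTop] at hconv
  obtain ⟨M, hM⟩ := hconv (ε / 2) (by linarith)
  set k := φ M with hk
  set l := φ (M + 1) with hlrw
  have hkl : k < l := hφ (Nat.lt_succ_self M)
  have hd : dist (σ^[l] p) (σ^[k] p) < ε := by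
    have h1 := hM M le_rfl
    have h2 := hM (M + 1) (Nat.le_succ M)
    calc dist (σ^[l] p) (σ^[k] p) ≤ dist (σ^[l] p) a + dist (σ^[k] p) a :=
          dist_triangle_right _ _ _
      _ < ε / 2 + ε / 2 := add_lt_add h2 h1
      _ = ε := by ring
  refine ⟨l - k, Nat.one_le_iff_ne_zero.mpr (Nat.sub_ne_zero_of_lt hkl), ?_⟩
  have hNk : g^[l - k] (σ^[l] p) = σ^[k] p := by
    have : σ^[l] p = σ^[l - k] (σ^[k] p) := by
      rw [← Function.iterate_add_apply, Nat.sub_add_cancel hkl.le]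
    rw [this, hiter]
  have key : g^[l - k] p = g^[l] (σ^[k] p) := by
    conv_lhs => rw [← hiter l p]
    rw [← Function.iterate_add_apply, Nat.add_comm, Function.iterate_add_apply, hNk]
  calc dist (g^[l - k] p) p = dist (g^[l] (σ^[k] p)) (g^[l] (σ^[l] p)) := by
        rw [key, hiter]
    _ ≤ dist (σ^[k] p) (σ^[l] p) := iter_nonexp g hl l _ _
    _ = dist (σ^[l] p) (σ^[k] p) := dist_comm _ _
    _ < ε := hd

/-- A surjective, 1-Lipschitz, measure-contracting self-mapping of a compact metric
space with a finite Borel measure is a bijective isometry and is measure-preserving. -/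
theorem stmt_0 {X : Type*} [MetricSpace X] [CompactSpace X]
    [MeasurableSpace X] [BorelSpace X]
    (μ : Measure X) [IsFiniteMeasure μ]
    (ψ : X → X) (hsurj : Function.Surjective ψ)
    (hlip : ∀ x y : X, dist (ψ x) (ψ y) ≤ dist x y)
    (hcontr : ∀ A : Set X, MeasurableSet A → μ A ≤ μ (ψ ⁻¹' A)) :
    Function.Bijective ψ ∧ (∀ x y : X, dist (ψ x) (ψ y) = dist x y) ∧
      (∀ A : Set X, MeasurableSet A → μ (ψ ⁻¹' A) = μ A) := by
  -- product map
  set g : X × X → X × X := Prod.map ψ ψ with hg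
  have hgs : Function.Surjective g := hsurj.prodMap hsurj
  have hgl : ∀ a b : X × X, dist (g a) (g b) ≤ dist a b := by
    intro a b
    simp only [hg, Prod.dist_eq, Prod.map_fst, Prod.map_snd]
    exact max_le_max (hlip _ _) (hlip _ _)
  have hgiter : ∀ n (x y : X), g^[n] (x, y) = (ψ^[n] x, ψ^[n] y) := by
    intro n
    induction n with
    | zero => simp
    | succ n ih =>
      intro x y
      rw [Function.iterate_succ_apply, hg]
      exact ih (ψ x) (ψ y)
  -- isometry
  have hiso : ∀ x y : X, dist (ψ x) (ψ y) = dist x y := by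
    intro x y
    refine le_antisymm (hlip x y) ?_
    refine le_of_forall_pos_le_add ?_
    intro ε hε
    obtain ⟨N, hN1, hNd⟩ := recur g hgs hgl (x, y) (ε / 2) (by linarith)
    rw [hgiter] at hNd
    rw [Prod.dist_eq, max_lt_iff] at hNd
    have hx : dist (ψ^[N] x) x < ε / 2 := hNd.1
    have hy : dist (ψ^[N] y) y < ε / 2 := hNd.2
    have hmid : dist (ψ^[N] x) (ψ^[N] y) ≤ dist (ψ x) (ψ y) := by
      obtain ⟨m, rfl⟩ := Nat.exists_eq_add_of_le hN1
      simp only [Nat.add_comm 1 m, Function.iterate_add_apply, Function.iterate_one]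
      exact iter_nonexp ψ hlip m (ψ x) (ψ y)
    calc dist x y ≤ dist x (ψ^[N] x) + dist (ψ^[N] x) (ψ^[N] y) + dist (ψ^[N] y) y :=
          dist_triangle4 _ _ _ _
      _ ≤ ε / 2 + dist (ψ x) (ψ y) + ε / 2 := by
          rw [dist_comm x]
          exact add_le_add (add_le_add hx.le hmid) hy.le
      _ = dist (ψ x) (ψ y) + ε := by ring
  have hinj : Function.Injective ψ := by
    intro x y h
    have := hiso x y
    rw [h, dist_self] at this
    exact dist_eq_zero.mp this.symm
  have hcont : Continuous ψ := (isometry_iff_dist_eq.mpr hiso).continuous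
  refine ⟨⟨hinj, hsurj⟩, hiso, ?_⟩
  intro A hA
  refine le_antisymm ?_ (hcontr A hA)
  have hAc := hcontr Aᶜ hA.compl
  have hmA : MeasurableSet (ψ ⁻¹' A) := hA.preimage hcont.measurable
  have h1 : μ (ψ ⁻¹' A) + μ Aᶜ ≤ μ (ψ ⁻¹' A) + μ (ψ ⁻¹' A)ᶜ := by
    rw [← Set.preimage_compl]
    exact add_le_add le_rfl hAc
  rw [measure_add_measure_compl hmA] at h1
  rw [← measure_add_measure_compl hA] at h1
  exact (ENNReal.add_le_add_iff_right (measure_ne_top μ Aᶜ)).mp h1
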